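/- Fix a finite multiset M of positive integers with |M| ≥ 2. There exists a bijection ρ from 𝒯_M onto ℬ_M such that for every T ∈ 𝒯_M: sleaf(T) equals the number of right leaves of ρ(T); eleaf(T) equals the number of left leaves of ρ(T); yleaf(T) equals the number of nodes of ρ(T) having only a left child; yint(T) equals the number of nodes of ρ(T) having only a right child; suleaf(T) equals the number of right leaves of ρ(T) whose parent has a left child; snuleaf(T) equals the number of right leaves of ρ(T) whose parent has no left child; etleaf(T) equals the number of left leaves of ρ(T) whose parent has no right child; entleaf(T) equals the number of left leaves of ρ(T) whose parent has a right child; yerleaf(T) equals the number of nodes of ρ(T) having only a left child and whose left child has a left child; and syleaf(T) equals the number of nodes of ρ(T) having only a left child and whose left child has no left child. -/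

import Mathlib

/-- Labeled plane trees: a node with a label in `ℕ` and a (left-to-right ordered)
list of children. -/
inductive LTree : Type where
  | node : ℕ → List LTree → LTree

namespace LTree

/-- The label of the root. -/
def label : LTree → ℕ
  | node a _ => a

/-- The list of children of the root, from left to right. -/
def children : LTree → List LTree
  | node _ cs => cs

/-- A tree consisting of a single node is a leaf. -/
def isLeaf (t : LTree) : Bool := t.children.isEmpty

/-- The list of all subtrees (i.e. all nodes) of a tree. -/
def subtrees : LTree → List LTree
  | node a cs => node a cs :: (cs.attach.map (fun c => subtrees c.1)).flatten
decreasing_by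
  simp only [LTree.node.sizeOf_spec]
  have := List.sizeOf_lt_of_mem c.2
  omega

/-- The multiset of labels of all nodes of a tree. -/
def labels (T : LTree) : Multiset ℕ := (T.subtrees.map label : List ℕ)

/-- `T` is a weakly increasing tree on the multiset `M`: the root is labeled `0`,
the multiset of labels is `M ∪ {0}`, labels weakly increase along root-to-leaf paths,
and the labels of the children of each node weakly increase from right to left. -/
def IsWIT (M : Multiset ℕ) (T : LTree) : Prop :=
  T.label = 0 ∧ T.labels = 0 ::ₘ M ∧
  ∀ t ∈ T.subtrees, (∀ c ∈ t.children, t.label ≤ c.label) ∧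
    List.Chain' (fun a b => b ≤ a) (t.children.map label)

/-- `T` is (an encoding of) a plane tree with `n` edges: all labels are zero
and there are `n + 1` nodes. -/
def IsPlane (n : ℕ) (T : LTree) : Prop :=
  (∀ t ∈ T.subtrees, t.label = 0) ∧ T.subtrees.length = n + 1

/-- The number of singleton leaves: leaves that are the only child of their parent. -/
def sleaf (T : LTree) : ℕ :=
  T.subtrees.countP (fun t => match t.children with
    | [c] => c.isLeaf
    | _ => false)

/-- The number of elder leaves: leaves that are the leftmost child of their parent
and have siblings. -/
def eleaf (T : LTree) : ℕ :=
  T.subtrees.countP (fun t => match t.children with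
    | c :: _ :: _ => c.isLeaf
    | _ => false)

/-- The number of young leaves: leaves that are not the leftmost child of their parent. -/
def yleaf (T : LTree) : ℕ :=
  (T.subtrees.map (fun t => t.children.tail.countP isLeaf)).sum

/-- The number of young internal nodes: internal nodes whose leftmost child is internal. -/
def yint (T : LTree) : ℕ :=
  T.subtrees.countP (fun t => match t.children with
    | c :: _ => !c.isLeaf
    | _ => false)

/-- The number of singleton internal nodes: parents of a singleton leaf. -/
def sint (T : LTree) : ℕ :=
  T.subtrees.countP (fun t => match t.children with
    | [c] => c.isLeaf
    | _ => false)

/-- The number of elder internal nodes: parents of an elder leaf. -/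
def eint (T : LTree) : ℕ :=
  T.subtrees.countP (fun t => match t.children with
    | c :: _ :: _ => c.isLeaf
    | _ => false)

/-- The number of old leaves: leaves that are the leftmost child of their parent. -/
def oleaf (T : LTree) : ℕ := sleaf T + eleaf T

/-- The number of old internal nodes. -/
def oint (T : LTree) : ℕ := sint T + eint T

/-- Whether the root of `t` is the parent of a singleton leaf. -/
def isSingletonParent (t : LTree) : Bool :=
  match t.children with
  | [c] => c.isLeaf
  | _ => false

/-- The number of singleton leaves with uncle: singleton leaves whose parent has an
elder sibling (a sibling to its left). -/
def suleaf (T : LTree) : ℕ :=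
  (T.subtrees.map (fun g => g.children.tail.countP isSingletonParent)).sum

/-- The number of singleton leaves with no uncle: singleton leaves whose parent has no
elder sibling (the parent is the root or a leftmost child). -/
def snuleaf (T : LTree) : ℕ :=
  (if T.isSingletonParent then 1 else 0) +
    (T.subtrees.map (fun g => match g.children with
      | c :: _ => if c.isSingletonParent then 1 else 0
      | [] => 0)).sum

/-- The number of elder twin leaves: elder leaves such that the second child of their
parent is also a leaf. -/
def etleaf (T : LTree) : ℕ :=
  T.subtrees.countP (fun t => match t.children with
    | c :: d :: _ => c.isLeaf && d.isLeaf
    | _ => false)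

/-- The number of elder non-twin leaves: elder leaves such that the second child of
their parent is not a leaf. -/
def entleaf (T : LTree) : ℕ :=
  T.subtrees.countP (fun t => match t.children with
    | c :: d :: _ => c.isLeaf && !d.isLeaf
    | _ => false)

/-- The number of second leaves: young leaves that are the second child of their parent. -/
def syleaf (T : LTree) : ℕ :=
  T.subtrees.countP (fun t => match t.children with
    | _ :: d :: _ => d.isLeaf
    | _ => false)

/-- The number of younger leaves: young leaves that are not the second child of their
parent. -/
def yerleaf (T : LTree) : ℕ :=
  (T.subtrees.map (fun t => (t.children.drop 2).countP isLeaf)).sum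

end LTree

/-- Labeled binary trees with labels in `ℕ`. -/
inductive LBT : Type where
  | nil : LBT
  | node : ℕ → LBT → LBT → LBT

namespace LBT

/-- The list of all subtrees rooted at actual nodes. -/
def subtrees : LBT → List LBT
  | nil => []
  | node a l r => node a l r :: (l.subtrees ++ r.subtrees)

/-- The label of the root (`0` for the empty tree). -/
def labelOf : LBT → ℕ
  | nil => 0
  | node a _ _ => a

/-- The left subtree. -/
def left : LBT → LBT
  | nil => nil
  | node _ l _ => l

/-- The right subtree. -/
def right : LBT → LBT
  | nil => nil
  | node _ _ r => r

/-- Whether the tree is empty. -/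
def isNil : LBT → Bool
  | nil => true
  | node _ _ _ => false

/-- Whether the tree is a single node (a leaf). -/
def isLeafB : LBT → Bool
  | node _ nil nil => true
  | _ => false

/-- The multiset of labels of all nodes. -/
def labels (B : LBT) : Multiset ℕ := (B.subtrees.map labelOf : List ℕ)

/-- `B` is a weakly increasing binary tree on the multiset `M`: the labels form the
multiset `M` and labels weakly increase along every path from the root. -/
def IsWIBT (M : Multiset ℕ) (B : LBT) : Prop :=
  B.labels = M ∧ ∀ t ∈ B.subtrees,
    (t.left ≠ nil → t.labelOf ≤ t.left.labelOf) ∧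
    (t.right ≠ nil → t.labelOf ≤ t.right.labelOf)

/-- The number of right leaves. -/
def rightLeafCount (B : LBT) : ℕ := B.subtrees.countP (fun t => isLeafB t.right)

/-- The number of left leaves. -/
def leftLeafCount (B : LBT) : ℕ := B.subtrees.countP (fun t => isLeafB t.left)

/-- The number of nodes having only a left child. -/
def onlyLeftCount (B : LBT) : ℕ :=
  B.subtrees.countP (fun t => !t.left.isNil && t.right.isNil)

/-- The number of nodes having only a right child. -/
def onlyRightCount (B : LBT) : ℕ :=
  B.subtrees.countP (fun t => t.left.isNil && !t.right.isNil)

/-- The number of right leaves whose parent has a left child. -/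
def rightLeafWithLeftCount (B : LBT) : ℕ :=
  B.subtrees.countP (fun t => isLeafB t.right && !t.left.isNil)

/-- The number of right leaves whose parent has no left child. -/
def rightLeafNoLeftCount (B : LBT) : ℕ :=
  B.subtrees.countP (fun t => isLeafB t.right && t.left.isNil)

/-- The number of left leaves whose parent has no right child. -/
def leftLeafNoRightCount (B : LBT) : ℕ :=
  B.subtrees.countP (fun t => isLeafB t.left && t.right.isNil)

/-- The number of left leaves whose parent has a right child. -/
def leftLeafWithRightCount (B : LBT) : ℕ :=
  B.subtrees.countP (fun t => isLeafB t.left && !t.right.isNil)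

/-- The number of nodes having only a left child, whose left child has a left child. -/
def onlyLeftGrandCount (B : LBT) : ℕ :=
  B.subtrees.countP (fun t => !t.left.isNil && t.right.isNil && !t.left.left.isNil)

/-- The number of nodes having only a left child, whose left child has no left child. -/
def onlyLeftNoGrandCount (B : LBT) : ℕ :=
  B.subtrees.countP (fun t => !t.left.isNil && t.right.isNil && t.left.left.isNil)

end LBT

namespace Rho
open LTree LBT

def sz (t : LTree) : ℕ := t.subtrees.length

theorem sz_node (a : ℕ) (cs : List LTree) :
    sz (LTree.node a cs) = 1 + (cs.map sz).sum := by
  simp [sz, LTree.subtrees, List.length_flatten, Function.comp]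
  rw [Nat.add_comm]; rfl

theorem szF_reverse (ts : List LTree) :
    ((ts.reverse).map sz).sum = (ts.map sz).sum := by
  rw [List.map_reverse, List.sum_reverse]

def toBF : List LTree → LBT
  | [] => LBT.nil
  | LTree.node a cs :: ts => LBT.node a (toBF ts) (toBF cs.reverse)
termination_by ts => (ts.map sz).sum
decreasing_by
  · simp only [List.map_cons, List.sum_cons, sz_node, szF_reverse]; omega
  · simp only [List.map_cons, List.sum_cons, sz_node, szF_reverse, List.unattach_reverse,
      List.unattach_attach]
    have : 0 ≤ (cs.map sz).sum := Nat.zero_le _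
    omega

end Rho

namespace Rho2
open Rho LTree LBT

def fromB : LBT → List LTree
  | .nil => []
  | .node a l r => LTree.node a (fromB r).reverse :: fromB l

theorem forestInd (P : List LTree → Prop) (h0 : P [])
    (h1 : ∀ a cs rest, P rest → P cs.reverse → P (LTree.node a cs :: rest))
    (ts : List LTree) : P ts := by
  suffices h : ∀ n ts, (ts.map sz).sum < n → P ts from
    h _ ts (Nat.lt_succ_self _)
  intro n
  induction n with
  | zero => intro ts h; omega
  | succ n ih =>
    intro ts hlt
    match ts with
    | [] => exact h0
    | LTree.node a cs :: rest =>
      simp only [List.map_cons, List.sum_cons, sz_node] at hlt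
      refine h1 a cs rest (ih _ ?_) (ih _ ?_)
      · omega
      · rw [szF_reverse]; omega

theorem toBF_fromB (B : LBT) : toBF (fromB B) = B := by
  induction B with
  | nil => simp [fromB, toBF]
  | node a l r ihl ihr =>
    simp [fromB, toBF, List.reverse_reverse, ihl, ihr]

theorem fromB_toBF (ts : List LTree) : fromB (toBF ts) = ts := by
  induction ts using forestInd with
  | h0 => simp [toBF, fromB]
  | h1 a cs rest ih1 ih2 =>
    simp [toBF, fromB, ih1, ih2, List.reverse_reverse]

end Rho2

namespace Rho3
open Rho Rho2 LTree LBT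

def mlab (l : List ℕ) : Multiset ℕ := l

theorem coe_flatten (l : List (List ℕ)) :
    mlab l.flatten = (l.map mlab).sum := by
  induction l with
  | nil => rfl
  | cons x xs ih =>
    rw [List.flatten_cons, List.map_cons, List.sum_cons, ← ih]
    exact Multiset.coe_add _ _

theorem subtrees_node (a : ℕ) (cs : List LTree) :
    (LTree.node a cs).subtrees
      = LTree.node a cs :: (cs.map LTree.subtrees).flatten := by
  rw [LTree.subtrees]
  simp

theorem labels_node (a : ℕ) (cs : List LTree) :
    (LTree.node a cs).labels = a ::ₘ (cs.map LTree.labels).sum := by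
  show mlab ((LTree.node a cs).subtrees.map label) = _
  rw [subtrees_node, List.map_cons]
  rw [show mlab (label (LTree.node a cs) :: List.map label (List.map LTree.subtrees cs).flatten)
      = label (LTree.node a cs) ::ₘ mlab (List.map label (List.map LTree.subtrees cs).flatten) from rfl]
  rw [List.map_flatten, coe_flatten]
  rw [List.map_map]
  simp only [LTree.label, List.map_map, Function.comp_def]
  rfl

theorem countP_subtrees (p : LTree → Bool) (a : ℕ) (cs : List LTree) :
    (LTree.node a cs).subtrees.countP p
      = (if p (LTree.node a cs) then 1 else 0)
        + (cs.map (fun c => c.subtrees.countP p)).sum := by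
  rw [subtrees_node, List.countP_cons, List.countP_flatten, List.map_map]
  simp [Function.comp_def]
  omega

theorem mapsum_subtrees (g : LTree → ℕ) (a : ℕ) (cs : List LTree) :
    ((LTree.node a cs).subtrees.map g).sum
      = g (LTree.node a cs) + (cs.map (fun c => (c.subtrees.map g).sum)).sum := by
  rw [subtrees_node, List.map_cons, List.sum_cons, List.map_flatten, List.sum_flatten,
    List.map_map]
  simp [Function.comp_def]

end Rho3

namespace Rho4
open Rho Rho2 Rho3 LTree LBT

theorem toBF_nil : toBF [] = LBT.nil := by rw [toBF]

theorem toBF_cons (a : ℕ) (cs ts : List LTree) :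
    toBF (LTree.node a cs :: ts) = LBT.node a (toBF ts) (toBF cs.reverse) := by
  rw [toBF]

theorem labelsB_node (a : ℕ) (l r : LBT) :
    (LBT.node a l r).labels = a ::ₘ (l.labels + r.labels) := by
  show mlab _ = _
  simp only [LBT.subtrees, List.map_cons, List.map_append, LBT.labelOf]
  rw [show mlab (a :: (List.map LBT.labelOf l.subtrees ++ List.map LBT.labelOf r.subtrees))
      = a ::ₘ mlab (List.map LBT.labelOf l.subtrees ++ List.map LBT.labelOf r.subtrees) from rfl]
  congr 1

theorem msum_reverse (f : LTree → Multiset ℕ) (l : List LTree) :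
    (l.reverse.map f).sum = (l.map f).sum := by
  rw [List.map_reverse, List.sum_reverse]

theorem nsum_reverse (f : LTree → ℕ) (l : List LTree) :
    (l.reverse.map f).sum = (l.map f).sum := by
  rw [List.map_reverse, List.sum_reverse]

theorem labels_toBF (ts : List LTree) :
    (toBF ts).labels = (ts.map LTree.labels).sum := by
  induction ts using forestInd with
  | h0 => rw [toBF_nil]; rfl
  | h1 a cs rest ih1 ih2 =>
    rw [toBF_cons, labelsB_node, ih1, ih2, msum_reverse, List.map_cons, List.sum_cons,
      labels_node, Multiset.cons_add, add_comm]

theorem isNil_toBF (ts : List LTree) : (toBF ts).isNil = ts.isEmpty := by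
  match ts with
  | [] => rw [toBF_nil]; rfl
  | LTree.node a cs :: rest => rw [toBF_cons]; rfl

theorem toBF_eq_nil (ts : List LTree) : toBF ts = LBT.nil ↔ ts = [] := by
  constructor
  · intro h
    have := isNil_toBF ts
    rw [h] at this
    simpa [LBT.isNil] using this.symm
  · rintro rfl; exact toBF_nil

def isLP : List LTree → Bool
  | [t] => t.isLeaf
  | _ => false

theorem isLP_of_len (l : List LTree) (h : l.length ≠ 1) : isLP l = false := by
  match l with
  | [] => rfl
  | [t] => simp at h
  | a :: b :: l => rfl

theorem isLP_reverse (l : List LTree) : isLP l.reverse = isLP l := by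
  match l with
  | [] => rfl
  | [t] => rfl
  | a :: b :: l =>
    rw [isLP_of_len _ (by simp), isLP_of_len _ (by simp)]

theorem isLeafB_toBF (ts : List LTree) : (toBF ts).isLeafB = isLP ts := by
  match ts with
  | [] => rw [toBF_nil]; rfl
  | [LTree.node a cs] =>
    rw [toBF_cons, toBF_nil]
    match hcs : cs.reverse with
    | [] =>
      rw [toBF_nil]
      have : cs = [] := List.reverse_eq_nil_iff.mp hcs
      subst this
      rfl
    | LTree.node b ds :: rest' =>
      rw [toBF_cons]
      have : cs ≠ [] := by
        intro hh; rw [hh] at hcs; simp at hcs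
      show false = isLP [LTree.node a cs]
      simp [isLP, LTree.isLeaf, LTree.children, List.isEmpty_iff, this, LBT.isLeafB]
  | LTree.node a cs :: t' :: rest' =>
    rw [toBF_cons]
    cases t' with
    | node b ds =>
      rw [toBF_cons, isLP_of_len _ (by simp)]
      rfl

theorem left_toBF (ts : List LTree) : (toBF ts).left = toBF ts.tail := by
  match ts with
  | [] => show (toBF []).left = toBF []; rw [toBF_nil]; rfl
  | LTree.node a cs :: rest => rw [toBF_cons]; rfl

end Rho4

namespace Rho5
open Rho Rho2 Rho3 Rho4 LTree LBT

def GoodT (t : LTree) : Prop :=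
  ∀ s ∈ t.subtrees, (∀ c ∈ s.children, s.label ≤ c.label) ∧
    List.Chain' (fun a b => b ≤ a) (s.children.map LTree.label)

def GoodB (B : LBT) : Prop :=
  ∀ s ∈ B.subtrees, (s.left ≠ .nil → s.labelOf ≤ s.left.labelOf) ∧
    (s.right ≠ .nil → s.labelOf ≤ s.right.labelOf)

theorem self_mem_subtrees (t : LTree) : t ∈ t.subtrees := by
  cases t with
  | node a cs => rw [subtrees_node]; exact List.mem_cons_self

theorem mem_subtrees_trans {a : ℕ} {cs : List LTree} {c s : LTree}
    (hc : c ∈ cs) (hs : s ∈ c.subtrees) : s ∈ (LTree.node a cs).subtrees := by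
  rw [subtrees_node]
  refine List.mem_cons_of_mem _ (List.mem_flatten.mpr ⟨c.subtrees, ?_, hs⟩)
  exact List.mem_map_of_mem hc

theorem GoodT_child {a : ℕ} {cs : List LTree} (h : GoodT (LTree.node a cs))
    {c : LTree} (hc : c ∈ cs) : GoodT c :=
  fun s hs => h s (mem_subtrees_trans hc hs)

theorem chain'_rev_iff (cs : List LTree) :
    List.Chain' (fun x y : LTree => x.label ≤ y.label) cs.reverse ↔
      List.Chain' (fun a b => b ≤ a) (cs.map LTree.label) := by
  unfold List.Chain'
  rw [List.isChain_reverse, List.isChain_map]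

theorem chain'_rev2 (l : List LTree)
    (h : List.Chain' (fun x y : LTree => x.label ≤ y.label) l) :
    List.Chain' (fun a b => b ≤ a) (l.reverse.map LTree.label) := by
  unfold List.Chain'
  rw [List.map_reverse, List.isChain_reverse, List.isChain_map]
  exact h

theorem le_of_chain' {a : ℕ} : ∀ (l : List LTree),
    List.Chain' (fun x y : LTree => x.label ≤ y.label) l →
    (∀ t ∈ l.head?, a ≤ t.label) → ∀ c ∈ l, a ≤ c.label := by
  intro l
  induction l with
  | nil => intro _ _ c hc; simp at hc
  | cons t l ih =>
    intro hc hh c hcm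
    have hat : a ≤ t.label := hh t rfl
    unfold List.Chain' at hc
    rw [List.isChain_cons] at hc
    rcases List.mem_cons.mp hcm with rfl | hm
    · exact hat
    · exact ih hc.2 (fun t' ht' => le_trans hat (hc.1 t' ht')) c hm

theorem ord1 : ∀ ts : List LTree, (∀ t ∈ ts, GoodT t) →
    List.Chain' (fun x y : LTree => x.label ≤ y.label) ts → GoodB (toBF ts) := by
  intro ts
  induction ts using forestInd with
  | h0 => intro _ _; rw [toBF_nil]; intro s hs; simp [LBT.subtrees] at hs
  | h1 a cs rest ih1 ih2 =>
    intro hg hc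
    rw [toBF_cons]
    have hgroot := hg _ List.mem_cons_self
    have hroot := hgroot _ (self_mem_subtrees _)
    simp only [LTree.children, LTree.label] at hroot
    intro s hs
    rw [LBT.subtrees, List.mem_cons, List.mem_append] at hs
    rcases hs with rfl | hs | hs
    · constructor
      · intro hne
        rw [LBT.left]
        match rest, hne with
        | [], hne => exact absurd toBF_nil hne
        | LTree.node b ds :: rest', _ =>
          unfold List.Chain' at hc
          rw [List.isChain_cons_cons] at hc
          rw [toBF_cons]
          exact hc.1
      · intro hne
        rw [LBT.right]
        match hrev : cs.reverse, hne with
        | [], hne => exact absurd toBF_nil hne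
        | LTree.node b ds :: rest', _ =>
          rw [toBF_cons]
          show a ≤ b
          have : LTree.node b ds ∈ cs := by
            rw [← List.mem_reverse, hrev]; exact List.mem_cons_self
          exact hroot.1 _ this
    · exact ih1 (fun t ht => hg t (List.mem_cons_of_mem _ ht)) hc.tail s hs
    · refine ih2 (fun t ht => GoodT_child hgroot (List.mem_reverse.mp ht)) ?_ s hs
      exact (chain'_rev_iff cs).mpr hroot.2

theorem ord2 : ∀ B : LBT, GoodB B →
    (∀ t ∈ fromB B, GoodT t) ∧
      List.Chain' (fun x y : LTree => x.label ≤ y.label) (fromB B) := by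
  intro B
  induction B with
  | nil => intro _; exact ⟨by simp [fromB], by simp [fromB]; exact List.isChain_nil⟩
  | node a l r ihl ihr =>
    intro hg
    have hroot := hg _ List.mem_cons_self
    simp only [LBT.left, LBT.right, LBT.labelOf] at hroot
    have hgl : GoodB l := fun s hs => hg s (by rw [LBT.subtrees]; simp [hs])
    have hgr : GoodB r := fun s hs => hg s (by rw [LBT.subtrees]; simp [hs])
    obtain ⟨ihl1, ihl2⟩ := ihl hgl
    obtain ⟨ihr1, ihr2⟩ := ihr hgr
    have hale : ∀ c ∈ fromB r, a ≤ c.label := by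
      refine le_of_chain' _ ihr2 ?_
      intro t ht
      match r, ht with
      | LBT.node b l' r', ht =>
        rw [fromB] at ht
        simp only [List.head?_cons, Option.mem_def, Option.some.injEq] at ht
        subst ht
        exact hroot.2 (by simp) |>.trans_eq rfl
    constructor
    · rw [fromB]
      intro t ht
      rcases List.mem_cons.mp ht with rfl | hm
      · -- GoodT (node a (fromB r).reverse)
        intro s hs
        rw [subtrees_node, List.mem_cons] at hs
        rcases hs with rfl | hs
        · constructor
          · intro c hcm
            simp only [LTree.children] at hcm ⊢
            exact hale c (List.mem_reverse.mp hcm)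
          · simp only [LTree.children]
            exact chain'_rev2 _ ihr2
        · rw [List.mem_flatten] at hs
          obtain ⟨L, hL, hsL⟩ := hs
          rw [List.mem_map] at hL
          obtain ⟨c, hcm, rfl⟩ := hL
          exact ihr1 c (List.mem_reverse.mp hcm) s hsL
      · exact ihl1 t hm
    · rw [fromB]
      unfold List.Chain'
      rw [List.isChain_cons]
      refine ⟨?_, ihl2⟩
      intro y hy
      match l, hy with
      | LBT.node b l' r', hy =>
        rw [fromB] at hy
        simp only [List.head?_cons, Option.mem_def, Option.some.injEq] at hy
        subst hy
        exact hroot.1 (by simp)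

end Rho5

namespace Rho6
open Rho Rho2 Rho3 Rho4 Rho5 LTree LBT

def bdry (f : LTree → List LTree → Bool) : List LTree → ℕ
  | [] => 0
  | t :: rest => (if f t rest then 1 else 0) + bdry f rest

theorem bdry_false (l : List LTree) : bdry (fun _ _ => false) l = 0 := by
  induction l with
  | nil => rfl
  | cons t rest ih => simp [bdry, ih]

def ind1 (g : LTree → Bool) : List LTree → ℕ
  | c :: _ => if g c then 1 else 0
  | _ => 0

def ind2 (k g : LTree → Bool) : List LTree → ℕ
  | c :: d :: _ => if k c && g d then 1 else 0
  | _ => 0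

def f35 (g k : LTree → Bool) (t : LTree) (rest : List LTree) : Bool :=
  match rest with
  | [v] => g t && k v
  | _ => false

theorem f35_len (g k : LTree → Bool) (t : LTree) (rest : List LTree)
    (h : rest.length ≠ 1) : f35 g k t rest = false := by
  match rest with
  | [] => rfl
  | [v] => simp at h
  | a :: b :: l => rfl

theorem ind2_cc (k g : LTree → Bool) (c d : LTree) (l l' : List LTree) :
    ind2 k g (c :: d :: l) = ind2 k g (c :: d :: l') := rfl

theorem reverse_ne_nil {rest : List LTree} {v : LTree} {l' : List LTree}
    (h : rest.reverse = v :: l') : rest.isEmpty = false := by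
  rcases rest with _ | _ <;> simp_all

theorem G1 (g : LTree → Bool) : ∀ l : List LTree,
    bdry (fun t rest => g t && rest.isEmpty) l = ind1 g l.reverse := by
  intro l
  induction l with
  | nil => rfl
  | cons t rest ih =>
    rw [bdry, List.reverse_cons]
    match hrev : rest.reverse with
    | [] =>
      have : rest = [] := by simpa using congrArg List.reverse hrev
      subst this
      simp [bdry, ind1]
    | v :: l' =>
      rw [reverse_ne_nil hrev]
      rw [ih, hrev]
      simp [ind1]

theorem G2 (g : LTree → Bool) : ∀ l : List LTree,
    bdry (fun t rest => g t && !rest.isEmpty) l = (l.reverse.tail).countP g := by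
  intro l
  induction l with
  | nil => rfl
  | cons t rest ih =>
    rw [bdry, List.reverse_cons]
    match hrev : rest.reverse with
    | [] =>
      have : rest = [] := by simpa using congrArg List.reverse hrev
      subst this
      simp [bdry]
    | v :: l' =>
      rw [reverse_ne_nil hrev]
      rw [ih, hrev]
      simp only [List.cons_append, List.tail_cons, List.countP_append]
      simp [List.countP_cons]
      cases g t <;> simp [Nat.add_comm]

theorem G35 (g k : LTree → Bool) : ∀ l : List LTree,
    bdry (f35 g k) l = ind2 k g l.reverse := by
  intro l
  induction l with
  | nil => rfl
  | cons t rest ih =>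
    rw [bdry, List.reverse_cons]
    match hrev : rest.reverse with
    | [] =>
      have : rest = [] := by simpa using congrArg List.reverse hrev
      subst this
      simp [bdry, f35, ind2]
    | [v] =>
      have : rest = [v] := by simpa using congrArg List.reverse hrev
      subst this
      simp only [ih, hrev]
      show (if f35 g k t [v] then 1 else 0) + ind2 k g [v] = ind2 k g [v, t]
      simp [f35, ind2, Bool.and_comm]
    | v :: u :: l' =>
      have hlen : rest.length ≠ 1 := by
        rw [← List.length_reverse, hrev]; simp
      rw [f35_len g k t rest hlen]
      rw [ih, hrev]
      simp [ind2]

theorem G4 (g : LTree → Bool) : ∀ l : List LTree,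
    bdry (fun t rest => g t && decide (2 ≤ rest.length)) l
      = (l.reverse.drop 2).countP g := by
  intro l
  induction l with
  | nil => rfl
  | cons t rest ih =>
    rw [bdry, List.reverse_cons]
    match hrev : rest.reverse with
    | [] =>
      have : rest = [] := by simpa using congrArg List.reverse hrev
      subst this
      simp [bdry]
    | [v] =>
      have : rest = [v] := by simpa using congrArg List.reverse hrev
      subst this
      simp [bdry]
    | v :: u :: l' =>
      have hlen : 2 ≤ rest.length := by
        rw [← List.length_reverse, hrev]; simp
      rw [ih, hrev]
      simp only [hlen, decide_eq_true_eq, decide_true, Bool.and_true]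
      simp only [List.cons_append, List.drop_succ_cons, List.drop_zero,
        List.countP_append]
      simp [List.countP_cons]
      cases g t <;> simp [Nat.add_comm]

theorem cntB (q : LBT → Bool) (a : ℕ) (l r : LBT) :
    (LBT.node a l r).subtrees.countP q
      = (if q (LBT.node a l r) then 1 else 0)
        + (l.subtrees.countP q + r.subtrees.countP q) := by
  rw [LBT.subtrees, List.countP_cons, List.countP_append]
  cases hq : q (LBT.node a l r) <;> simp [hq] <;> try omega

theorem master (q : LBT → Bool) (stat : LTree → ℕ) (statind : List LTree → ℕ)
    (f : LTree → List LTree → Bool)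
    (hstat : ∀ a cs, stat (LTree.node a cs) = statind cs + (cs.map stat).sum)
    (hkey : ∀ a (cs rest : List LTree),
      (if q (LBT.node a (toBF rest) (toBF cs.reverse)) then 1 else 0)
          + bdry f cs.reverse
        = statind cs + (if f (LTree.node a cs) rest then 1 else 0)) :
    ∀ ts : List LTree,
      (toBF ts).subtrees.countP q = (ts.map stat).sum + bdry f ts := by
  intro ts
  induction ts using forestInd with
  | h0 => rw [toBF_nil]; rfl
  | h1 a cs rest ih1 ih2 =>
    rw [toBF_cons, cntB, ih1, ih2, nsum_reverse, List.map_cons, List.sum_cons,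
      hstat, bdry]
    have := hkey a cs rest
    omega

end Rho6

namespace Rho7
open Rho Rho2 Rho3 Rho4 Rho5 Rho6 LTree LBT

theorem isEmpty_reverse (l : List LTree) : l.reverse.isEmpty = l.isEmpty := by
  cases l with
  | nil => rfl
  | cons t l => simp

theorem isLeaf_node (a : ℕ) (cs : List LTree) :
    (LTree.node a cs).isLeaf = cs.isEmpty := rfl

theorem isSP_node (a : ℕ) (cs : List LTree) :
    (LTree.node a cs).isSingletonParent = isLP cs := by
  show (match cs with | [c] => c.isLeaf | _ => false) = isLP cs
  match cs with
  | [] => rfl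
  | [c] => rfl
  | a :: b :: l => rfl

-- hstat lemmas
theorem sleaf_node (a : ℕ) (cs : List LTree) :
    LTree.sleaf (LTree.node a cs)
      = (if isLP cs then 1 else 0) + (cs.map LTree.sleaf).sum := by
  refine (countP_subtrees _ a cs).trans ?_
  congr 1

theorem eleaf_node (a : ℕ) (cs : List LTree) :
    LTree.eleaf (LTree.node a cs)
      = ind2 LTree.isLeaf (fun _ => true) cs + (cs.map LTree.eleaf).sum := by
  refine (countP_subtrees _ a cs).trans ?_
  congr 1
  show (if (match cs with | c :: _ :: _ => c.isLeaf | _ => false) then 1 else 0) = _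
  match cs with
  | [] => rfl
  | [c] => rfl
  | c :: d :: l => simp [ind2]

theorem yleaf_node (a : ℕ) (cs : List LTree) :
    LTree.yleaf (LTree.node a cs)
      = cs.tail.countP LTree.isLeaf + (cs.map LTree.yleaf).sum :=
  mapsum_subtrees _ a cs

theorem yint_node (a : ℕ) (cs : List LTree) :
    LTree.yint (LTree.node a cs)
      = ind1 (fun c => !c.isLeaf) cs + (cs.map LTree.yint).sum := by
  refine (countP_subtrees _ a cs).trans ?_
  congr 1
  show (if (match cs with | c :: _ => !c.isLeaf | _ => false) then 1 else 0) = _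
  match cs with
  | [] => rfl
  | c :: l => rfl

theorem suleaf_node (a : ℕ) (cs : List LTree) :
    LTree.suleaf (LTree.node a cs)
      = cs.tail.countP LTree.isSingletonParent + (cs.map LTree.suleaf).sum :=
  mapsum_subtrees _ a cs

def hsp (T : LTree) : ℕ :=
  (T.subtrees.map (fun g => match g.children with
    | c :: _ => if c.isSingletonParent then 1 else 0
    | [] => 0)).sum

theorem snuleaf_eq (T : LTree) :
    LTree.snuleaf T = (if T.isSingletonParent then 1 else 0) + hsp T := rfl

theorem hsp_node (a : ℕ) (cs : List LTree) :
    hsp (LTree.node a cs)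
      = ind1 LTree.isSingletonParent cs + (cs.map hsp).sum := by
  refine (mapsum_subtrees _ a cs).trans ?_
  congr 1
  show (match cs with | c :: _ => if c.isSingletonParent then 1 else 0 | [] => 0) = _
  match cs with
  | [] => rfl
  | c :: l => rfl

theorem etleaf_node (a : ℕ) (cs : List LTree) :
    LTree.etleaf (LTree.node a cs)
      = ind2 LTree.isLeaf LTree.isLeaf cs + (cs.map LTree.etleaf).sum := by
  refine (countP_subtrees _ a cs).trans ?_
  congr 1
  show (if (match cs with | c :: d :: _ => c.isLeaf && d.isLeaf | _ => false) then 1 else 0) = _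
  match cs with
  | [] => rfl
  | [c] => rfl
  | c :: d :: l => rfl

theorem entleaf_node (a : ℕ) (cs : List LTree) :
    LTree.entleaf (LTree.node a cs)
      = ind2 LTree.isLeaf (fun t => !t.isLeaf) cs + (cs.map LTree.entleaf).sum := by
  refine (countP_subtrees _ a cs).trans ?_
  congr 1
  show (if (match cs with | c :: d :: _ => c.isLeaf && !d.isLeaf | _ => false) then 1 else 0) = _
  match cs with
  | [] => rfl
  | [c] => rfl
  | c :: d :: l => rfl

theorem syleaf_node (a : ℕ) (cs : List LTree) :
    LTree.syleaf (LTree.node a cs)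
      = ind2 (fun _ => true) LTree.isLeaf cs + (cs.map LTree.syleaf).sum := by
  refine (countP_subtrees _ a cs).trans ?_
  congr 1
  show (if (match cs with | _ :: d :: _ => d.isLeaf | _ => false) then 1 else 0) = _
  match cs with
  | [] => rfl
  | [c] => rfl
  | c :: d :: l => simp [ind2]

theorem yerleaf_node (a : ℕ) (cs : List LTree) :
    LTree.yerleaf (LTree.node a cs)
      = (cs.drop 2).countP LTree.isLeaf + (cs.map LTree.yerleaf).sum :=
  mapsum_subtrees _ a cs

end Rho7

namespace Rho8
open Rho Rho2 Rho3 Rho4 Rho5 Rho6 Rho7 LTree LBT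

theorem left_node (a : ℕ) (l r : LBT) : (LBT.node a l r).left = l := rfl
theorem right_node (a : ℕ) (l r : LBT) : (LBT.node a l r).right = r := rfl

theorem iteB (x y : Bool) (h : x = y) :
    (if x = true then (1:ℕ) else 0) = if y = true then 1 else 0 := by rw [h]

theorem S1 (ts : List LTree) :
    LBT.rightLeafCount (toBF ts)
      = (ts.map LTree.sleaf).sum + bdry (fun _ _ => false) ts := by
  refine master _ _ (fun cs => if isLP cs then 1 else 0) _ sleaf_node ?_ ts
  intro a cs rest
  simp only [right_node, isLeafB_toBF, isLP_reverse, bdry_false]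
  simp

theorem S2 (ts : List LTree) :
    LBT.leftLeafCount (toBF ts)
      = (ts.map LTree.eleaf).sum + bdry (f35 (fun _ => true) LTree.isLeaf) ts := by
  refine master _ _ (ind2 LTree.isLeaf (fun _ => true)) _ eleaf_node ?_ ts
  intro a cs rest
  simp only [left_node, isLeafB_toBF, G35, List.reverse_reverse]
  rw [Nat.add_comm]
  refine congrArg (_ + ·) (iteB _ _ ?_)
  match rest with
  | [] => rfl
  | [v] => simp [isLP, f35]
  | v :: u :: l => rfl

theorem S3 (ts : List LTree) :
    LBT.onlyLeftCount (toBF ts)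
      = (ts.map LTree.yleaf).sum
        + bdry (fun t rest => t.isLeaf && !rest.isEmpty) ts := by
  refine master _ _ (fun cs => cs.tail.countP LTree.isLeaf) _ yleaf_node ?_ ts
  intro a cs rest
  simp only [left_node, right_node, isNil_toBF, isEmpty_reverse, G2,
    List.reverse_reverse, isLeaf_node]
  rw [Nat.add_comm]
  refine congrArg (_ + ·) (iteB _ _ ?_)
  cases cs.isEmpty <;> cases rest.isEmpty <;> rfl

theorem S4 (ts : List LTree) :
    LBT.onlyRightCount (toBF ts)
      = (ts.map LTree.yint).sum
        + bdry (fun t rest => !t.isLeaf && rest.isEmpty) ts := by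
  refine master _ _ (ind1 (fun c => !c.isLeaf)) _ yint_node ?_ ts
  intro a cs rest
  simp only [left_node, right_node, isNil_toBF, isEmpty_reverse, G1,
    List.reverse_reverse, isLeaf_node]
  rw [Nat.add_comm]
  refine congrArg (_ + ·) (iteB _ _ ?_)
  cases cs.isEmpty <;> cases rest.isEmpty <;> rfl

theorem S5 (ts : List LTree) :
    LBT.rightLeafWithLeftCount (toBF ts)
      = (ts.map LTree.suleaf).sum
        + bdry (fun t rest => t.isSingletonParent && !rest.isEmpty) ts := by
  refine master _ _ (fun cs => cs.tail.countP LTree.isSingletonParent) _ suleaf_node ?_ ts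
  intro a cs rest
  simp only [left_node, right_node, isNil_toBF, isEmpty_reverse, G2, isLeafB_toBF,
    isLP_reverse, List.reverse_reverse, isSP_node]
  rw [Nat.add_comm]

theorem S6 (ts : List LTree) :
    LBT.rightLeafNoLeftCount (toBF ts)
      = (ts.map hsp).sum
        + bdry (fun t rest => t.isSingletonParent && rest.isEmpty) ts := by
  refine master _ _ (ind1 LTree.isSingletonParent) _ hsp_node ?_ ts
  intro a cs rest
  simp only [left_node, right_node, isNil_toBF, isEmpty_reverse, G1, isLeafB_toBF,
    isLP_reverse, List.reverse_reverse, isSP_node]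
  rw [Nat.add_comm]

theorem S7 (ts : List LTree) :
    LBT.leftLeafNoRightCount (toBF ts)
      = (ts.map LTree.etleaf).sum
        + bdry (f35 LTree.isLeaf LTree.isLeaf) ts := by
  refine master _ _ (ind2 LTree.isLeaf LTree.isLeaf) _ etleaf_node ?_ ts
  intro a cs rest
  simp only [left_node, right_node, isNil_toBF, isEmpty_reverse, G35, isLeafB_toBF,
    isLP_reverse, List.reverse_reverse]
  rw [Nat.add_comm]
  refine congrArg (_ + ·) (iteB _ _ ?_)
  match rest with
  | [] => simp [isLP, f35]
  | [v] =>
    show (isLP [v] && cs.isEmpty) = ((LTree.node a cs).isLeaf && v.isLeaf)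
    simp [isLP, isLeaf_node, Bool.and_comm]
  | v :: u :: l =>
    rw [isLP_of_len (v :: u :: l) (by simp)]
    rfl

theorem S8 (ts : List LTree) :
    LBT.leftLeafWithRightCount (toBF ts)
      = (ts.map LTree.entleaf).sum
        + bdry (f35 (fun t => !t.isLeaf) LTree.isLeaf) ts := by
  refine master _ _ (ind2 LTree.isLeaf (fun t => !t.isLeaf)) _ entleaf_node ?_ ts
  intro a cs rest
  simp only [left_node, right_node, isNil_toBF, isEmpty_reverse, G35, isLeafB_toBF,
    isLP_reverse, List.reverse_reverse]
  rw [Nat.add_comm]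
  refine congrArg (_ + ·) (iteB _ _ ?_)
  match rest with
  | [] => simp [isLP, f35]
  | [v] =>
    show (isLP [v] && !cs.isEmpty) = (!(LTree.node a cs).isLeaf && v.isLeaf)
    simp [isLP, isLeaf_node, Bool.and_comm]
  | v :: u :: l =>
    rw [isLP_of_len (v :: u :: l) (by simp)]
    rfl

theorem len2_eq (l : List LTree) :
    (!l.isEmpty && !l.tail.isEmpty) = decide (2 ≤ l.length) := by
  match l with
  | [] => rfl
  | [v] => rfl
  | v :: u :: l => simp

theorem S9 (ts : List LTree) :
    LBT.onlyLeftGrandCount (toBF ts)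
      = (ts.map LTree.yerleaf).sum
        + bdry (fun t rest => t.isLeaf && decide (2 ≤ rest.length)) ts := by
  refine master _ _ (fun cs => (cs.drop 2).countP LTree.isLeaf) _ yerleaf_node ?_ ts
  intro a cs rest
  simp only [left_node, right_node, left_toBF, isNil_toBF, isEmpty_reverse, G4,
    List.reverse_reverse, isLeaf_node]
  rw [Nat.add_comm]
  refine congrArg (_ + ·) (iteB _ _ ?_)
  show (!rest.isEmpty && cs.isEmpty && !rest.tail.isEmpty) = _
  rw [Bool.and_comm (!rest.isEmpty), Bool.and_assoc, len2_eq]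

theorem S10 (ts : List LTree) :
    LBT.onlyLeftNoGrandCount (toBF ts)
      = (ts.map LTree.syleaf).sum
        + bdry (f35 LTree.isLeaf (fun _ => true)) ts := by
  refine master _ _ (ind2 (fun _ => true) LTree.isLeaf) _ syleaf_node ?_ ts
  intro a cs rest
  simp only [left_node, right_node, left_toBF, isNil_toBF, isEmpty_reverse, G35,
    List.reverse_reverse, isLeaf_node]
  rw [Nat.add_comm]
  refine congrArg (_ + ·) (iteB _ _ ?_)
  match rest with
  | [] => simp [f35]
  | [v] => simp [f35, isLeaf_node]
  | v :: u :: l => simp [f35]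

end Rho8

namespace Rho9
open Rho Rho2 Rho3 Rho4 Rho5 Rho6 Rho7 Rho8 LTree LBT

-- tree-level statistic corollaries
theorem main1 (a : ℕ) (cs : List LTree) :
    LTree.sleaf (LTree.node a cs)
      = LBT.rightLeafCount (toBF cs.reverse) + (if isLP cs then 1 else 0) := by
  rw [S1, nsum_reverse, bdry_false, sleaf_node]
  omega

theorem main2 (a : ℕ) (cs : List LTree) :
    LTree.eleaf (LTree.node a cs) = LBT.leftLeafCount (toBF cs.reverse) := by
  rw [S2, nsum_reverse, G35, List.reverse_reverse, eleaf_node, Nat.add_comm]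

theorem main3 (a : ℕ) (cs : List LTree) :
    LTree.yleaf (LTree.node a cs) = LBT.onlyLeftCount (toBF cs.reverse) := by
  rw [S3, nsum_reverse, G2, List.reverse_reverse, yleaf_node, Nat.add_comm]

theorem main4 (a : ℕ) (cs : List LTree) :
    LTree.yint (LTree.node a cs) = LBT.onlyRightCount (toBF cs.reverse) := by
  rw [S4, nsum_reverse, G1, List.reverse_reverse, yint_node, Nat.add_comm]

theorem main5 (a : ℕ) (cs : List LTree) :
    LTree.suleaf (LTree.node a cs) = LBT.rightLeafWithLeftCount (toBF cs.reverse) := by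
  rw [S5, nsum_reverse, G2, List.reverse_reverse, suleaf_node, Nat.add_comm]

theorem main6 (a : ℕ) (cs : List LTree) :
    LTree.snuleaf (LTree.node a cs)
      = LBT.rightLeafNoLeftCount (toBF cs.reverse) + (if isLP cs then 1 else 0) := by
  rw [S6, nsum_reverse, G1, List.reverse_reverse, snuleaf_eq, hsp_node, isSP_node]
  omega

theorem main7 (a : ℕ) (cs : List LTree) :
    LTree.etleaf (LTree.node a cs) = LBT.leftLeafNoRightCount (toBF cs.reverse) := by
  rw [S7, nsum_reverse, G35, List.reverse_reverse, etleaf_node, Nat.add_comm]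

theorem main8 (a : ℕ) (cs : List LTree) :
    LTree.entleaf (LTree.node a cs) = LBT.leftLeafWithRightCount (toBF cs.reverse) := by
  rw [S8, nsum_reverse, G35, List.reverse_reverse, entleaf_node, Nat.add_comm]

theorem main9 (a : ℕ) (cs : List LTree) :
    LTree.yerleaf (LTree.node a cs) = LBT.onlyLeftGrandCount (toBF cs.reverse) := by
  rw [S9, nsum_reverse, G4, List.reverse_reverse, yerleaf_node, Nat.add_comm]

theorem main10 (a : ℕ) (cs : List LTree) :
    LTree.syleaf (LTree.node a cs) = LBT.onlyLeftNoGrandCount (toBF cs.reverse) := by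
  rw [S10, nsum_reverse, G35, List.reverse_reverse, syleaf_node, Nat.add_comm]

theorem isLP_false_of_card (M : Multiset ℕ) (hcard : 2 ≤ Multiset.card M)
    (cs : List LTree) (h : (LTree.node 0 cs).labels = 0 ::ₘ M) :
    isLP cs = false := by
  cases hLP : isLP cs with
  | false => rfl
  | true =>
    exfalso
    match cs, hLP with
    | [LTree.node b ds], hLP =>
      have hds : ds = [] := by
        have : (LTree.node b ds).isLeaf = true := hLP
        rw [isLeaf_node] at this
        exact List.isEmpty_iff.mp this
      subst hds
      rw [labels_node, List.map_cons, List.map_nil, List.sum_cons, List.sum_nil,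
        labels_node, List.map_nil, List.sum_nil] at h
      have := congrArg Multiset.card h
      simp at this
      omega

theorem to_WIBT {M : Multiset ℕ} {T : LTree} (h : LTree.IsWIT M T) :
    LBT.IsWIBT M (toBF T.children.reverse) := by
  obtain ⟨a, cs⟩ := T
  obtain ⟨h1, h2, h3⟩ := h
  have ha : a = 0 := h1
  subst ha
  have hgood : GoodT (LTree.node 0 cs) := h3
  have hroot := hgood _ (self_mem_subtrees _)
  constructor
  · rw [show (LTree.node 0 cs).children = cs from rfl, labels_toBF, msum_reverse]
    rw [labels_node] at h2
    exact (Multiset.cons_inj_right 0).mp h2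
  · refine ord1 _ (fun t ht => GoodT_child hgood (List.mem_reverse.mp ht)) ?_
    exact (chain'_rev_iff cs).mpr hroot.2

theorem from_WIT {M : Multiset ℕ} {B : LBT} (h : LBT.IsWIBT M B) :
    LTree.IsWIT M (LTree.node 0 (fromB B).reverse) := by
  obtain ⟨h1, h2⟩ := h
  obtain ⟨hg1, hg2⟩ := ord2 B h2
  refine ⟨rfl, ?_, ?_⟩
  · rw [labels_node, msum_reverse, ← labels_toBF, toBF_fromB, h1]
  · intro s hs
    rw [subtrees_node, List.mem_cons] at hs
    rcases hs with rfl | hs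
    · refine ⟨fun c _ => Nat.zero_le _, ?_⟩
      show List.Chain' _ ((fromB B).reverse.map LTree.label)
      exact chain'_rev2 _ hg2
    · rw [List.mem_flatten] at hs
      obtain ⟨L, hL, hsL⟩ := hs
      rw [List.mem_map] at hL
      obtain ⟨c, hcm, rfl⟩ := hL
      exact hg1 c (List.mem_reverse.mp hcm) s hsL

end Rho9

open Rho Rho2 Rho3 Rho4 Rho5 Rho6 Rho7 Rho8 Rho9 in
theorem rho_bijection_statistics'
    (M : Multiset ℕ) (hM : ∀ x ∈ M, 0 < x) (hcard : 2 ≤ Multiset.card M) :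
    ∃ ρ : {T : LTree // LTree.IsWIT M T} → {B : LBT // LBT.IsWIBT M B},
      Function.Bijective ρ ∧
        ∀ T : {T : LTree // LTree.IsWIT M T},
          LTree.sleaf T.1 = LBT.rightLeafCount (ρ T).1 ∧
          LTree.eleaf T.1 = LBT.leftLeafCount (ρ T).1 ∧
          LTree.yleaf T.1 = LBT.onlyLeftCount (ρ T).1 ∧
          LTree.yint T.1 = LBT.onlyRightCount (ρ T).1 ∧
          LTree.suleaf T.1 = LBT.rightLeafWithLeftCount (ρ T).1 ∧
          LTree.snuleaf T.1 = LBT.rightLeafNoLeftCount (ρ T).1 ∧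
          LTree.etleaf T.1 = LBT.leftLeafNoRightCount (ρ T).1 ∧
          LTree.entleaf T.1 = LBT.leftLeafWithRightCount (ρ T).1 ∧
          LTree.yerleaf T.1 = LBT.onlyLeftGrandCount (ρ T).1 ∧
          LTree.syleaf T.1 = LBT.onlyLeftNoGrandCount (ρ T).1 := by
  refine ⟨fun T => ⟨toBF T.1.children.reverse, to_WIBT T.2⟩, ?_, ?_⟩
  · refine Function.bijective_iff_has_inverse.mpr
      ⟨fun B => ⟨LTree.node 0 (fromB B.1).reverse, from_WIT B.2⟩, ?_, ?_⟩
    · rintro ⟨T, hT⟩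
      obtain ⟨a, cs⟩ := T
      have ha : a = 0 := hT.1
      subst ha
      apply Subtype.ext
      show LTree.node 0 (fromB (toBF cs.reverse)).reverse = LTree.node 0 cs
      rw [fromB_toBF, List.reverse_reverse]
    · rintro ⟨B, hB⟩
      apply Subtype.ext
      show toBF ((LTree.node 0 (fromB B).reverse).children).reverse = B
      rw [show (LTree.node 0 (fromB B).reverse).children = (fromB B).reverse from rfl,
        List.reverse_reverse, toBF_fromB]
  · rintro ⟨T, hT⟩
    obtain ⟨a, cs⟩ := T
    have ha : a = 0 := hT.1
    subst ha
    have hLP : isLP cs = false := isLP_false_of_card M hcard cs hT.2.1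
    have h1 := main1 0 cs
    have h6 := main6 0 cs
    rw [hLP] at h1 h6
    simp only [if_neg Bool.false_ne_true, Nat.add_zero] at h1 h6
    exact ⟨h1, main2 0 cs, main3 0 cs, main4 0 cs, main5 0 cs, h6,
      main7 0 cs, main8 0 cs, main9 0 cs, main10 0 cs⟩


/-- **Theorem (the bijection `ρ` and its statistics).**  For a multiset `M` of positive
integers with `|M| ≥ 2` there is a bijection `ρ` from the weakly increasing trees on `M`
onto the weakly increasing binary trees on `M` translating the ten statistics as stated. -/
theorem rho_bijection_statistics
    (M : Multiset ℕ) (hM : ∀ x ∈ M, 0 < x) (hcard : 2 ≤ Multiset.card M) :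
    ∃ ρ : {T : LTree // LTree.IsWIT M T} → {B : LBT // LBT.IsWIBT M B},
      Function.Bijective ρ ∧
        ∀ T : {T : LTree // LTree.IsWIT M T},
          LTree.sleaf T.1 = LBT.rightLeafCount (ρ T).1 ∧
          LTree.eleaf T.1 = LBT.leftLeafCount (ρ T).1 ∧
          LTree.yleaf T.1 = LBT.onlyLeftCount (ρ T).1 ∧
          LTree.yint T.1 = LBT.onlyRightCount (ρ T).1 ∧
          LTree.suleaf T.1 = LBT.rightLeafWithLeftCount (ρ T).1 ∧
          LTree.snuleaf T.1 = LBT.rightLeafNoLeftCount (ρ T).1 ∧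
          LTree.etleaf T.1 = LBT.leftLeafNoRightCount (ρ T).1 ∧
          LTree.entleaf T.1 = LBT.leftLeafWithRightCount (ρ T).1 ∧
          LTree.yerleaf T.1 = LBT.onlyLeftGrandCount (ρ T).1 ∧
          LTree.syleaf T.1 = LBT.onlyLeftNoGrandCount (ρ T).1 := by
  exact rho_bijection_statistics' M hM hcard
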